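/- Let (r_t) satisfy r_{t+1} ≤ (1 − aγ_t)r_t + cγ_t² with 0 < a ≤ b, c ≥ 0. Fix K > 0, k₀ = ⌈K/2⌉, s = 2b/a, and choose γ_t = 1/b for t < k₀ (or if K ≤ b/a for all t) and γ_t = 2/(a(s + t − k₀)) for t ≥ k₀ when K ≥ b/a. Then r_K ≤ exp(−aK/(2b))·r₀ + 9c/(a²K). -/

import Mathlib

set_option maxHeartbeats 1000000

theorem geom_aux14 (q d : ℝ) (hq0 : 0 ≤ q) (hq1 : q < 1) (hd : 0 ≤ d)
    (r : ℕ → ℝ) (n : ℕ) (hrec : ∀ t < n, r (t+1) ≤ q * r t + d) :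
    r n ≤ q ^ n * r 0 + d / (1 - q) := by
  induction n with
  | zero =>
    have : 0 ≤ d / (1 - q) := div_nonneg hd (by linarith)
    simp only [pow_zero, one_mul]
    linarith
  | succ n ih =>
    have h1 : r n ≤ q ^ n * r 0 + d / (1 - q) :=
      ih (fun t ht => hrec t (Nat.lt_succ_of_lt ht))
    have h2 := hrec n (Nat.lt_succ_self n)
    have h3 : q * r n ≤ q * (q ^ n * r 0 + d / (1 - q)) :=
      mul_le_mul_of_nonneg_left h1 hq0
    have hq : 0 < 1 - q := by linarith
    have h4 : q * (d/(1-q)) + d = d / (1-q) := by field_simp; ring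
    calc r (n+1) ≤ q * r n + d := h2
      _ ≤ q * (q ^ n * r 0 + d / (1 - q)) + d := by linarith
      _ = q ^ (n+1) * r 0 + (q * (d/(1-q)) + d) := by ring
      _ = q ^ (n+1) * r 0 + d / (1 - q) := by rw [h4]

theorem exp_aux14 (a b : ℝ) (ha : 0 < a) (hab : a ≤ b) (n : ℕ) :
    (1 - a/b) ^ n ≤ Real.exp (-(a/b) * n) := by
  have hb : 0 < b := lt_of_lt_of_le ha hab
  have h1 : 1 - a/b ≤ Real.exp (-(a/b)) := by
    have := Real.add_one_le_exp (-(a/b))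
    linarith
  have h0 : 0 ≤ 1 - a/b := by
    have : a/b ≤ 1 := (div_le_one hb).mpr hab
    linarith
  calc (1 - a/b) ^ n ≤ (Real.exp (-(a/b))) ^ n := pow_le_pow_left₀ h0 h1 n
    _ = Real.exp (-(a/b) * n) := by
        rw [← Real.exp_nat_mul]; ring_nf

theorem stmt14 (a b c : ℝ) (ha : 0 < a) (hab : a ≤ b) (hc : 0 ≤ c)
    (K : ℕ) (hK : 0 < K) (r : ℕ → ℝ) (hr : ∀ t, 0 ≤ r t)
    (k0 : ℕ) (hk0 : k0 = (K + 1) / 2) (s : ℝ) (hs : s = 2 * b / a)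
    (γ : ℕ → ℝ)
    (hγ : ∀ t, γ t = if (K : ℝ) ≤ b / a ∨ t < k0 then 1 / b
      else 2 / (a * (s + (t : ℝ) - (k0 : ℝ))))
    (hγb : ∀ t, γ t ≤ 1 / b)
    (hrec : ∀ t, r (t + 1) ≤ (1 - a * γ t) * r t + c * (γ t) ^ 2) :
    r K ≤ Real.exp (-(a * K) / (2 * b)) * r 0 + 9 * c / (a ^ 2 * K) := by
  have hb : 0 < b := lt_of_lt_of_le ha hab
  have hq0 : 0 ≤ 1 - a/b := by
    have : a/b ≤ 1 := (div_le_one hb).mpr hab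
    linarith
  have hq1 : 1 - a/b < 1 := by
    have : 0 < a/b := div_pos ha hb
    linarith
  have hd0 : 0 ≤ c * (1/b)^2 := by positivity
  have hds : c * (1/b)^2 / (1 - (1 - a/b)) = c / (a*b) := by
    field_simp; ring_nf; rw [mul_assoc, mul_inv_cancel₀ ha.ne', mul_one]
  have hKpos : (0:ℝ) < K := by exact_mod_cast hK
  have hstep : ∀ t, γ t = 1/b → r (t+1) ≤ (1 - a/b) * r t + c * (1/b)^2 := by
    intro t hγt
    have := hrec t
    rw [hγt] at this
    calc r (t+1) ≤ (1 - a * (1/b)) * r t + c * (1/b)^2 := this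
      _ = (1 - a/b) * r t + c * (1/b)^2 := by ring_nf
  have hexpmono : ∀ n : ℕ, (K:ℝ) ≤ 2*n →
      Real.exp (-(a/b) * n) ≤ Real.exp (-(a*K)/(2*b)) := by
    intro n hn
    apply Real.exp_le_exp.mpr
    rw [neg_div, neg_mul, neg_le_neg_iff, div_le_iff₀ (by positivity)]
    have he : a/b*(n:ℝ)*(2*b) = 2*(a*n) := by field_simp
    rw [he]
    nlinarith [mul_le_mul_of_nonneg_left hn ha.le]
  by_cases hcase : (K:ℝ) ≤ b / a
  · -- small K case: γ t = 1/b always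
    have hgeom : r K ≤ (1 - a/b) ^ K * r 0 + c * (1/b)^2 / (1 - (1 - a/b)) := by
      apply geom_aux14 _ _ hq0 hq1 hd0 r K
      intro t _
      exact hstep t (by rw [hγ t]; simp [hcase])
    rw [hds] at hgeom
    have hexp : (1 - a/b) ^ K ≤ Real.exp (-(a*K)/(2*b)) :=
      le_trans (exp_aux14 a b ha hab K) (hexpmono K (by linarith))
    have h1 : (1 - a/b) ^ K * r 0 ≤ Real.exp (-(a*K)/(2*b)) * r 0 :=
      mul_le_mul_of_nonneg_right hexp (hr 0)
    have haK : (K:ℝ)*a ≤ b := (le_div_iff₀ ha).mp hcase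
    have h2 : c/(a*b) ≤ 9*c/(a^2*K) := by
      rw [div_le_div_iff₀ (by positivity) (by positivity)]
      nlinarith [mul_le_mul_of_nonneg_left haK (mul_nonneg hc ha.le),
        mul_nonneg (mul_nonneg hc ha.le) hb.le]
    linarith
  · -- large K case
    push_neg at hcase
    have hba1 : (1:ℝ) ≤ b/a := (le_div_iff₀ ha).mpr (by linarith)
    have hK2 : 2 ≤ K := by
      rcases Nat.lt_or_ge K 2 with h | h
      · have hK1 : K = 1 := by omega
        rw [hK1] at hcase; push_cast at hcase; linarith
      · exact h
    have hs2 : 2 ≤ s := by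
      rw [hs, le_div_iff₀ ha]; linarith
    set U := K - k0 with hU
    have hn1 : (K:ℝ) ≤ 2 * k0 := by exact_mod_cast (by omega : K ≤ 2 * k0)
    have hn2 : k0 + U = K := by omega
    have hU1 : (1:ℝ) ≤ U := by exact_mod_cast (by omega : 1 ≤ U)
    have hKU : (K:ℝ) ≤ 2*(U:ℝ) + 1 := by exact_mod_cast (by omega : K ≤ 2*U+1)
    -- phase 1
    have hphase1 : r k0 ≤ (1 - a/b) ^ k0 * r 0 + c/(a*b) := by
      rw [← hds]
      apply geom_aux14 _ _ hq0 hq1 hd0 r k0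
      intro t ht
      exact hstep t (by rw [hγ t]; simp [ht])
    -- phase 2 induction
    have key : ∀ u : ℕ,
        (s+u-1)*(s+u-2) * r (k0+u) ≤ (s-1)*(s-2)*(r k0) + 4*c/a^2 * u := by
      intro u
      induction u with
      | zero => norm_num
      | succ u ih =>
        set P := s + (u:ℝ) with hP
        have hu0 : (0:ℝ) ≤ u := Nat.cast_nonneg u
        have hP2 : 2 ≤ P := by rw [hP]; linarith
        have hPpos : 0 < P := by linarith
        have hγt : γ (k0+u) = 2/(a*P) := by
          rw [hγ (k0+u), if_neg (by push_neg; exact ⟨hcase, by omega⟩), hP]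
          push_cast; ring_nf
        have hrec' := hrec (k0+u)
        rw [hγt] at hrec'
        have hmul : (0:ℝ) ≤ P*(P-1) := by nlinarith
        have h1 : P*(P-1) * r (k0+u+1)
            ≤ P*(P-1) * ((1 - a*(2/(a*P))) * r (k0+u) + c*(2/(a*P))^2) :=
          mul_le_mul_of_nonneg_left hrec' hmul
        have h2 : P*(P-1) * ((1 - a*(2/(a*P))) * r (k0+u) + c*(2/(a*P))^2)
            = (P-1)*(P-2) * r (k0+u) + 4*c*(P-1)/(a^2*P) := by
          field_simp; ring
        rw [h2] at h1
        have h3 : 4*c*(P-1)/(a^2*P) ≤ 4*c/a^2 := by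
          rw [div_le_div_iff₀ (by positivity) (by positivity)]
          nlinarith [mul_nonneg hc (sq_nonneg a)]
        have hidx : k0 + (u+1) = (k0+u) + 1 := by omega
        rw [hidx]
        have hgoal : (s+((u:ℝ)+1)-1)*(s+((u:ℝ)+1)-2) = P*(P-1) := by
          rw [hP]; ring
        push_cast
        rw [hgoal]
        calc P*(P-1) * r (k0+u+1)
            ≤ (P-1)*(P-2) * r (k0+u) + 4*c*(P-1)/(a^2*P) := h1
          _ ≤ (P-1)*(P-2) * r (k0+u) + 4*c/a^2 := by linarith
          _ = (s+u-1)*(s+u-2) * r (k0+u) + 4*c/a^2 := by rw [hP]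
          _ ≤ (s-1)*(s-2)*(r k0) + 4*c/a^2 * u + 4*c/a^2 := by linarith [ih]
          _ = (s-1)*(s-2)*(r k0) + 4*c/a^2 * ((u:ℝ)+1) := by ring
    have hfin := key U
    rw [hn2] at hfin
    set D1 := s + (U:ℝ) - 1 with hD1
    set D2 := s + (U:ℝ) - 2 with hD2
    have hD2pos : 0 < D2 := by rw [hD2]; linarith
    have hD1pos : 0 < D1 := by rw [hD1]; linarith
    have hDpos : 0 < D1 * D2 := mul_pos hD1pos hD2pos
    have hss : 0 ≤ (s-1)*(s-2) := by nlinarith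
    have hssD : (s-1)*(s-2) ≤ D1*D2 := by
      rw [hD1, hD2]; nlinarith
    have hcomb : D1*D2 * r K
        ≤ (s-1)*(s-2) * ((1 - a/b)^k0 * r 0 + c/(a*b)) + 4*c/a^2 * U := by
      have := mul_le_mul_of_nonneg_left hphase1 hss
      linarith
    have hexp : (1 - a/b) ^ k0 ≤ Real.exp (-(a*K)/(2*b)) :=
      le_trans (exp_aux14 a b ha hab k0) (hexpmono k0 hn1)
    have hcoef : (s-1)*(s-2) * ((1 - a/b)^k0 * r 0)
        ≤ D1*D2 * (Real.exp (-(a*K)/(2*b)) * r 0) := by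
      have h0 : 0 ≤ (1 - a/b)^k0 * r 0 := mul_nonneg (pow_nonneg hq0 _) (hr 0)
      have hA : (s-1)*(s-2) * ((1 - a/b)^k0 * r 0) ≤ D1*D2 * ((1 - a/b)^k0 * r 0) :=
        mul_le_mul_of_nonneg_right hssD h0
      have hB : (1 - a/b)^k0 * r 0 ≤ Real.exp (-(a*K)/(2*b)) * r 0 :=
        mul_le_mul_of_nonneg_right hexp (hr 0)
      calc (s-1)*(s-2) * ((1 - a/b)^k0 * r 0) ≤ D1*D2 * ((1 - a/b)^k0 * r 0) := hA
        _ ≤ D1*D2 * (Real.exp (-(a*K)/(2*b)) * r 0) :=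
            mul_le_mul_of_nonneg_left hB hDpos.le
    -- the key arithmetic inequality for the c-terms
    have hC : (s-1)*(s-2) * (c/(a*b)) + 4*c/a^2 * U ≤ D1*D2 * (9*c/(a^2*K)) := by
      have hbs : b = a*s/2 := by rw [hs]; field_simp
      have h1 : 2*(s-1)*(s-2)/s + 4*(U:ℝ) ≤ 9*(D1*D2)/K := by
        have ha1 : 2*(s-1)*(s-2)/s ≤ 2*(s-2) := by
          rw [div_le_iff₀ (by linarith)]
          nlinarith
        have ha2 : 2*(s-2) + 4*(U:ℝ) ≤ 9*(D1*D2)/K := by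
          rw [le_div_iff₀ hKpos, hD1, hD2]
          have ha3 : (2*(s-2) + 4*(U:ℝ)) * K ≤ (2*(s-2) + 4*(U:ℝ)) * (2*U+1) :=
            mul_le_mul_of_nonneg_left hKU (by linarith)
          nlinarith [mul_nonneg (by linarith : (0:ℝ) ≤ s-2) (by linarith : (0:ℝ) ≤ (U:ℝ)),
            sq_nonneg (s-2), sq_nonneg ((U:ℝ))]
        linarith
      have e1 : (s-1)*(s-2) * (c/(a*b)) + 4*c/a^2 * U
          = c/a^2 * (2*(s-1)*(s-2)/s + 4*U) := by
        rw [hbs]; field_simp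
      have e2 : D1*D2 * (9*c/(a^2*K)) = c/a^2 * (9*(D1*D2)/K) := by
        field_simp
      rw [e1, e2]
      exact mul_le_mul_of_nonneg_left h1 (by positivity)
    have hfinal : D1*D2 * r K
        ≤ D1*D2 * (Real.exp (-(a*K)/(2*b)) * r 0 + 9*c/(a^2*K)) := by
      nlinarith [hcomb, hcoef, hC]
    exact le_of_mul_le_mul_left hfinal hDpos
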